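/- Let Γ be a countable group with a faithful transitive action Γ ↷ I on a countable set I such that for all i ≠ j in I the orbit (Stab_Γ(i))·j is infinite, where Stab_Γ(i) = {g ∈ Γ : g·i = i}. Let Σ₀ be a nontrivial abelian group, let Σ = Σ₀^(I) be the direct sum (the group of finitely supported functions I → Σ₀) with Γ acting by permuting coordinates, (g·a)_i = a_{g⁻¹·i}, and let G = Σ ⋊ Γ be the resulting generalized wreath product. Then for every automorphism δ of G and every i₀ ∈ I, there exist g₀ ∈ G and an automorphism δ₀ of Σ₀ such that g₀ · δ(π_{i₀}(b)) · g₀⁻¹ = π_{i₀}(δ₀(b)) for all b ∈ Σ₀, where π_{i₀} : Σ₀ → Σ ≤ G is the embedding placing b in position i₀. In particular, every automorphism of G maps the subgroup Σ onto Σ. -/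

import Mathlib

set_option linter.unusedSectionVars false
set_option maxHeartbeats 1000000


/-- The action `φ` of `Γ` on the direct sum `Σ₀^(I)` (finitely supported functions `I → A`)
is the one permuting coordinates: `(g·a)_i = a_{g⁻¹·i}`. -/
def IsCoordinatePermutationAction {Γ I A : Type*} [Group Γ] [MulAction Γ I] [AddCommGroup A]
    (φ : Γ →* MulAut (Multiplicative (I →₀ A))) : Prop :=
  ∀ (g : Γ) (a : Multiplicative (I →₀ A)) (i : I),
    Multiplicative.toAdd (φ g a) i = Multiplicative.toAdd a (g⁻¹ • i)

open Multiplicative Finsupp SemidirectProduct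

section base
variable {Γ I A : Type*} [Group Γ] [MulAction Γ I] [AddCommGroup A]
variable {φ : Γ →* MulAut (Multiplicative (I →₀ A))}

lemma pair_noncomm {x : Multiplicative (I →₀ A) ⋊[φ] Γ} {i : I} {c : A} {k : Γ}
    (hφ' : ∀ (g : Γ) (a : Multiplicative (I →₀ A)) (i : I),
      Multiplicative.toAdd (φ g a) i = Multiplicative.toAdd a (g⁻¹ • i))
    (hne : (single i c : I →₀ A) (x.right⁻¹ • i)
        - (single i c : I →₀ A) (k • (k * x.right)⁻¹ • x.right⁻¹ • i)
        - (single i c : I →₀ A) i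
        + (single i c : I →₀ A) (k • (k * x.right)⁻¹ • i) ≠ 0) :
    ∃ y : Multiplicative (I →₀ A) ⋊[φ] Γ, ¬ Commute x (y * x * y⁻¹) := by
  by_cases hc1 : Commute x ((inr k) * x * (inr k)⁻¹)
  · refine ⟨⟨ofAdd (single i c), k⟩, fun hc2 => ?_⟩
    have h1 := congrArg (fun u => (toAdd u.left) i) hc1.eq
    have h2 := congrArg (fun u => (toAdd u.left) i) hc2.eq
    simp only [mul_left, mul_right, inv_left, inv_right, left_inl, right_inl, left_inr, right_inr,
      toAdd_mul, toAdd_inv, Finsupp.add_apply, Finsupp.neg_apply, hφ', inv_one,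
      one_smul, map_one, MulAut.one_apply, mul_one, one_mul, inv_inv, toAdd_ofAdd,
      inv_smul_smul, toAdd_one, Finsupp.zero_apply, neg_zero, add_zero, zero_add] at h1 h2
    apply hne
    set a := toAdd x.left
    set b := (single i c : I →₀ A)
    have e : b (x.right⁻¹ • i) - b (k • (k * x.right)⁻¹ • x.right⁻¹ • i)
        - b i + b (k • (k * x.right)⁻¹ • i)
        = ((a : I →₀ A) i + (b (x.right⁻¹ • i) + a (k⁻¹ • x.right⁻¹ • i)
            + -(b (k • (k * x.right)⁻¹ • x.right⁻¹ • i))))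
          - (a i + a (k⁻¹ • x.right⁻¹ • i))
          - (b i + a (k⁻¹ • i) + -(b (k • (k * x.right)⁻¹ • i))
            + a ((k * x.right * k⁻¹)⁻¹ • i))
          + (a (k⁻¹ • i) + a ((k * x.right * k⁻¹)⁻¹ • i)) := by abel
    rw [e, h1, h2]
    abel
  · exact ⟨inr k, hc1⟩
end base

section main
variable {Γ I A : Type*} [Group Γ] [MulAction Γ I] [AddCommGroup A]
variable {φ : Γ →* MulAut (Multiplicative (I →₀ A))}

lemma exists_nonconj [Nontrivial A]
    (hφ' : ∀ (g : Γ) (a : Multiplicative (I →₀ A)) (i : I),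
      Multiplicative.toAdd (φ g a) i = Multiplicative.toAdd a (g⁻¹ • i))
    (hfaith : ∀ g : Γ, (∀ i : I, g • i = i) → g = 1)
    (hstab : ∀ i j : I, i ≠ j → {x : I | ∃ g : Γ, g • i = i ∧ x = g • j}.Infinite)
    {x : Multiplicative (I →₀ A) ⋊[φ] Γ} (hx : x.right ≠ 1) :
    ∃ y : Multiplicative (I →₀ A) ⋊[φ] Γ, ¬ Commute x (y * x * y⁻¹) := by
  classical
  set g := x.right with hg
  have : ¬ ∀ i : I, g • i = i := fun h => hx (hfaith g h)
  push_neg at this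
  obtain ⟨i, hgi⟩ := this
  obtain ⟨c, hc⟩ : ∃ c : A, c ≠ 0 := exists_ne 0
  -- basic ne facts
  have hgi' : g⁻¹ • i ≠ i := fun h => hgi (inv_smul_eq_iff.mp h).symm
  by_cases h2 : ∀ j : I, g • g • j = j
  · have hinv : ∀ w : I, g⁻¹ • w = g • w := fun w => by
      conv_lhs => rw [← h2 w, inv_smul_smul]
    by_cases hA : ∀ d : A, d + d = 0
    · -- involution on I, exponent 2: use hstab to find a good conjugator
      have hSinf := hstab i (g • i) (Ne.symm hgi)
      obtain ⟨q, hqS, hqF⟩ :=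
        ((hSinf.diff ((Set.finite_singleton (g • i)).insert i)).nonempty)
      obtain ⟨k, hki, hq⟩ := hqS
      simp only [Set.mem_insert_iff, Set.mem_singleton_iff, not_or] at hqF
      obtain ⟨hq1, hq2⟩ := hqF
      have hki' : k⁻¹ • i = i := inv_smul_eq_iff.mpr hki.symm
      apply pair_noncomm hφ'
      -- compute the four values
      have b1 : (single i c : I →₀ A) (g⁻¹ • i) = 0 := single_eq_of_ne' (Ne.symm hgi')
      have b2 : (single i c : I →₀ A) (k • (k * g)⁻¹ • g⁻¹ • i) = 0 := by
        apply single_eq_of_ne'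
        intro h
        rw [mul_inv_rev, mul_smul, hinv, hinv] at h
        have h3 : (i : I) = g • k⁻¹ • g • i := by
          simpa only [inv_smul_smul, hki'] using congrArg (fun w => k⁻¹ • w) h
        have h4 : g • i = k⁻¹ • g • i := by
          simpa only [h2] using congrArg (fun w => g • w) h3
        apply hq2
        rw [hq]
        simpa only [smul_inv_smul] using congrArg (fun w => k • w) h4
      have b3 : (single i c : I →₀ A) i = c := single_eq_same
      have b4 : (single i c : I →₀ A) (k • (k * g)⁻¹ • i) = 0 := by
        apply single_eq_of_ne'
        intro h
        rw [mul_inv_rev, mul_smul, hki', hinv] at h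
        exact hq1 (hq.trans h.symm)
      rw [← hg, b1, b2, b3, b4]
      have e : (0:A) - 0 - c + 0 = -c := by abel
      rw [e]
      exact neg_ne_zero.mpr hc
    · push_neg at hA
      obtain ⟨d, hd⟩ := hA
      apply pair_noncomm hφ' (i := i) (c := d) (k := 1)
      have b1 : (single i d : I →₀ A) (g⁻¹ • i) = 0 := single_eq_of_ne' (Ne.symm hgi')
      have b2 : (1 : Γ) • ((1 * g)⁻¹ • g⁻¹ • i) = i := by
        rw [one_smul, one_mul, hinv, hinv, h2]
      have b4 : (1 : Γ) • ((1 * g)⁻¹ • i) = g⁻¹ • i := by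
        rw [one_smul, one_mul]
      rw [← hg, b2, b4, b1, single_eq_same]
      have e : (0:A) - d - d + 0 = -(d + d) := by abel
      rw [e]
      exact neg_ne_zero.mpr hd
  · push_neg at h2
    obtain ⟨j, hj⟩ := h2
    have hgj : g • j ≠ j := fun h => hj (by rw [h, h])
    have hgj' : g⁻¹ • j ≠ j := fun h => hgj (inv_smul_eq_iff.mp h).symm
    apply pair_noncomm hφ' (i := j) (c := c) (k := 1)
    have b1 : (single j c : I →₀ A) (g⁻¹ • j) = 0 := single_eq_of_ne' (Ne.symm hgj')
    have b2 : (single j c : I →₀ A) ((1 : Γ) • (1 * g)⁻¹ • g⁻¹ • j) = 0 := by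
      rw [one_smul, one_mul]
      apply single_eq_of_ne'
      intro h
      apply hj
      conv_lhs => rw [h]
      rw [smul_inv_smul, smul_inv_smul]
    have b4 : (single j c : I →₀ A) ((1 : Γ) • (1 * g)⁻¹ • j) = 0 := by
      rw [one_smul, one_mul]
      exact single_eq_of_ne' (Ne.symm hgj')
    rw [← hg, b1, b2, b4, single_eq_same]
    have e : (0:A) - 0 - c + 0 = -c := by abel
    rw [e]
    exact neg_ne_zero.mpr hc
end main

section base
variable {Γ I A : Type*} [Group Γ] [MulAction Γ I] [AddCommGroup A]
variable {φ : Γ →* MulAut (Multiplicative (I →₀ A))}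

lemma conj_inl (y : (Multiplicative (I →₀ A)) ⋊[φ] Γ) (a : Multiplicative (I →₀ A)) :
    y * inl a * y⁻¹ = inl (φ y.right a) := by
  ext
  · simp only [mul_left, mul_right, inv_left, inv_right, left_inl, right_inl, mul_one, map_mul]
    simp only [map_inv, MulAut.apply_inv_self]
    rw [mul_comm y.left ((φ y.right) a), mul_assoc, mul_inv_cancel, mul_one]
  · simp [mul_right, inv_right, right_inl]

lemma right_eq_one_iff_mem (x : (Multiplicative (I →₀ A)) ⋊[φ] Γ) :
    x ∈ (inl : Multiplicative (I →₀ A) →* _).range ↔ x.right = 1 := by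
  rw [range_inl_eq_ker_rightHom, MonoidHom.mem_ker, rightHom_eq_right]

lemma inl_left_of_right_one {x : (Multiplicative (I →₀ A)) ⋊[φ] Γ} (h : x.right = 1) :
    inl x.left = x := by
  ext <;> simp [h]

lemma commute_conj_of_right_one {x : (Multiplicative (I →₀ A)) ⋊[φ] Γ} (h : x.right = 1)
    (y : (Multiplicative (I →₀ A)) ⋊[φ] Γ) : Commute x (y * x * y⁻¹) := by
  rw [← inl_left_of_right_one h, conj_inl]
  unfold Commute SemiconjBy
  rw [← map_mul, ← map_mul, mul_comm]

variable [Nontrivial A]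
variable (hφ' : ∀ (g : Γ) (a : Multiplicative (I →₀ A)) (i : I),
      Multiplicative.toAdd (φ g a) i = Multiplicative.toAdd a (g⁻¹ • i))
    (hfaith : ∀ g : Γ, (∀ i : I, g • i = i) → g = 1)
    (hstab : ∀ i j : I, i ≠ j → {x : I | ∃ g : Γ, g • i = i ∧ x = g • j}.Infinite)

lemma map_right_one
    (exists_nonconj' : ∀ {x : Multiplicative (I →₀ A) ⋊[φ] Γ}, x.right ≠ 1 →
      ∃ y : Multiplicative (I →₀ A) ⋊[φ] Γ, ¬ Commute x (y * x * y⁻¹))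
    (δ : MulAut (Multiplicative (I →₀ A) ⋊[φ] Γ))
    {x : Multiplicative (I →₀ A) ⋊[φ] Γ} (hx : x.right = 1) : (δ x).right = 1 := by
  by_contra h
  obtain ⟨y, hy⟩ := exists_nonconj' h
  apply hy
  have hy' : y * δ x * y⁻¹ = δ ((δ.symm y) * x * (δ.symm y)⁻¹) := by
    simp [map_mul, map_inv, MulEquiv.apply_symm_apply]
  rw [hy']
  exact (commute_conj_of_right_one hx (δ.symm y)).map δ.toMonoidHom

lemma part2
    (exists_nonconj' : ∀ {x : Multiplicative (I →₀ A) ⋊[φ] Γ}, x.right ≠ 1 →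
      ∃ y : Multiplicative (I →₀ A) ⋊[φ] Γ, ¬ Commute x (y * x * y⁻¹))
    (δ : MulAut (Multiplicative (I →₀ A) ⋊[φ] Γ)) :
    Subgroup.map δ.toMonoidHom
        (SemidirectProduct.inl : Multiplicative (I →₀ A) →* _).range =
      (SemidirectProduct.inl : Multiplicative (I →₀ A) →* _).range := by
  ext x
  simp only [Subgroup.mem_map]
  constructor
  · rintro ⟨s, hs, rfl⟩
    rw [right_eq_one_iff_mem] at hs ⊢
    exact map_right_one exists_nonconj' δ hs
  · intro hx
    refine ⟨δ.symm x, ?_, δ.apply_symm_apply x⟩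
    rw [right_eq_one_iff_mem] at hx ⊢
    exact map_right_one exists_nonconj' δ.symm hx
end base

section key
variable {Γ I A : Type*} [Group Γ] [MulAction Γ I] [AddCommGroup A]
variable {φ : Γ →* MulAut (Multiplicative (I →₀ A))}

local notation "ψ" => fun (g : Γ) (a : I →₀ A) => Multiplicative.toAdd (φ g (Multiplicative.ofAdd a))

lemma psi_apply' (hφ' : ∀ (g : Γ) (a : Multiplicative (I →₀ A)) (i : I),
      Multiplicative.toAdd (φ g a) i = Multiplicative.toAdd a (g⁻¹ • i))
    (g : Γ) (a : I →₀ A) (i : I) : (ψ g a) i = a (g⁻¹ • i) := hφ' g (ofAdd a) i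

lemma psi_single' (hφ' : ∀ (g : Γ) (a : Multiplicative (I →₀ A)) (i : I),
      Multiplicative.toAdd (φ g a) i = Multiplicative.toAdd a (g⁻¹ • i))
    (g : Γ) (i : I) (c : A) : ψ g (single i c) = single (g • i) c := by
  classical
  ext j
  rw [psi_apply' hφ']
  rw [Finsupp.single_apply, Finsupp.single_apply]
  by_cases h : i = g⁻¹ • j
  · subst h; simp
  · rw [if_neg h, if_neg]
    intro hc; exact h (by rw [← hc]; simp)

lemma key_lemma
    (hφ' : ∀ (g : Γ) (a : Multiplicative (I →₀ A)) (i : I),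
      Multiplicative.toAdd (φ g a) i = Multiplicative.toAdd a (g⁻¹ • i))
    (hstab : ∀ i j : I, i ≠ j → {x : I | ∃ g : Γ, g • i = i ∧ x = g • j}.Infinite)
    (θ : (I →₀ A) ≃+ (I →₀ A)) (d : Γ ≃* Γ)
    (hequiv : ∀ (g : Γ) (a : I →₀ A), θ (ψ g a) = ψ (d g) (θ a))
    (i₀ : I) (b : A) (hb : b ≠ 0) :
    ∃ (j : I) (c : A), c ≠ 0 ∧ θ (single i₀ b) = single j c := by
  classical
  have hequiv' : ∀ (g : Γ) (a : I →₀ A), θ.symm (ψ (d g) a) = ψ g (θ.symm a) := by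
    intro g a
    apply θ.injective
    rw [AddEquiv.apply_symm_apply, hequiv g (θ.symm a), AddEquiv.apply_symm_apply]
  set v := θ (single i₀ b) with hvdef
  have hsingle_ne : (single i₀ b : I →₀ A) ≠ 0 := fun h => hb (Finsupp.single_eq_zero.mp h)
  have hv : v ≠ 0 := by
    intro h
    apply hsingle_ne
    have := congrArg θ.symm h
    rwa [AddEquiv.symm_apply_apply, map_zero] at this
  -- stabilizer transport for v
  have stab_v' : ∀ g : Γ, g • i₀ = i₀ → ψ (d g) v = v := by
    intro g hg
    rw [hvdef, ← hequiv, psi_single' hφ', hg]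
  have mem_v : ∀ g : Γ, g • i₀ = i₀ → ∀ t, t ∈ v.support → (d g) • t ∈ v.support := by
    intro g hg t ht
    have hv' := stab_v' g hg
    rw [Finsupp.mem_support_iff]
    have hvt : v ((d g) • t) = v t := by
      conv_lhs => rw [← hv']
      rw [psi_apply' hφ', inv_smul_smul]
    rw [hvt]; exact Finsupp.mem_support_iff.mp ht
  -- main claim : support of v is a singleton
  have hsupp : ∀ p ∈ v.support, ∀ r ∈ v.support, p = r := by
    intro p hp r hr
    by_contra hpr
    -- find j in the support with i₀ in the support of θ.symm (single j (v j))
    have hv_sum : v = ∑ t ∈ v.support, single t (v t) := (Finsupp.sum_single v).symm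
    have hdecomp : (single i₀ b : I →₀ A)
        = ∑ t ∈ v.support, θ.symm (single t (v t)) := by
      have h1 : (single i₀ b : I →₀ A) = θ.symm v := by
        rw [hvdef, AddEquiv.symm_apply_apply]
      rw [h1]
      conv_lhs => rw [hv_sum]
      exact map_sum θ.symm _ _
    have hsum_i₀ : ∑ t ∈ v.support, (θ.symm (single t (v t))) i₀ = b := by
      have := congrArg (fun u => u i₀) hdecomp
      simp only [single_eq_same] at this
      exact (Finsupp.finset_sum_apply _ _ _).symm.trans this.symm
    obtain ⟨j, hjs, hji⟩ : ∃ j ∈ v.support, (θ.symm (single j (v j))) i₀ ≠ 0 := by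
      by_contra h'
      push_neg at h'
      rw [Finset.sum_eq_zero h'] at hsum_i₀
      exact hb hsum_i₀.symm
    -- pick p' in the support different from j
    obtain ⟨p', hp'v, hpj⟩ : ∃ p' ∈ v.support, p' ≠ j := by
      rcases eq_or_ne p j with h | h
      · exact ⟨r, hr, fun hrj => hpr (h.trans hrj.symm)⟩
      · exact ⟨p, hp, h⟩
    set w := θ.symm (single j (v j)) with hwdef
    have hvj : v j ≠ 0 := Finsupp.mem_support_iff.mp hjs
    have stab_w : ∀ g : Γ, (d g) • j = j → ψ g w = w := by
      intro g hgj
      have h1 := hequiv' g (single j (v j))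
      rw [hwdef, ← h1, psi_single' hφ', hgj]
    have mem_w : ∀ g : Γ, (d g) • j = j → g • i₀ ∈ w.support := by
      intro g hgj
      have hw := stab_w g hgj
      rw [Finsupp.mem_support_iff]
      have hwt : w (g • i₀) = w i₀ := by
        conv_lhs => rw [← hw]
        rw [psi_apply' hφ', inv_smul_smul]
      rw [hwt]; exact hji
    -- the Stab(j)-orbit of p' is finite
    set rep : I → Γ := fun s =>
      if h : ∃ k : Γ, k • j = j ∧ (d.symm k) • i₀ = s then h.choose else 1 with hrep
    have hO : {x : I | ∃ k : Γ, k • j = j ∧ x = k • p'} ⊆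
        ⋃ s ∈ (w.support : Set I), (fun t => rep s • t) '' (v.support : Set I) := by
      rintro x ⟨k, hkj, rfl⟩
      have hdk : d (d.symm k) = k := d.apply_symm_apply k
      have hs : (d.symm k) • i₀ ∈ w.support := mem_w (d.symm k) (by rw [hdk]; exact hkj)
      have hex : ∃ k' : Γ, k' • j = j ∧ (d.symm k') • i₀ = (d.symm k) • i₀ := ⟨k, hkj, rfl⟩
      have hk₀ : (rep ((d.symm k) • i₀)) • j = j ∧
          (d.symm (rep ((d.symm k) • i₀))) • i₀ = (d.symm k) • i₀ := by
        rw [hrep]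
        simp only [dif_pos hex]
        exact hex.choose_spec
      set k₀ := rep ((d.symm k) • i₀) with hk₀def
      have hfix : ((d.symm k₀)⁻¹ * (d.symm k)) • i₀ = i₀ := by
        rw [mul_smul, ← hk₀.2, inv_smul_smul]
      have hmem : (k₀⁻¹ * k) • p' ∈ v.support := by
        have := mem_v ((d.symm k₀)⁻¹ * (d.symm k)) hfix p' hp'v
        rwa [map_mul, map_inv, d.apply_symm_apply, d.apply_symm_apply] at this
      refine Set.mem_biUnion (Finset.mem_coe.mpr hs) ?_
      refine ⟨(k₀⁻¹ * k) • p', Finset.mem_coe.mpr hmem, ?_⟩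
      show rep (d.symm k • i₀) • ((k₀⁻¹ * k) • p') = k • p'
      rw [← hk₀def, ← mul_smul, mul_inv_cancel_left]
    have hfin : (⋃ s ∈ (w.support : Set I),
        (fun t => rep s • t) '' (v.support : Set I)).Finite :=
      Set.Finite.biUnion (w.support.finite_toSet) (fun s _ => (v.support.finite_toSet).image _)
    exact (hstab j p' (Ne.symm hpj)) (hfin.subset hO)
  -- conclude
  obtain ⟨j, hj⟩ := Finsupp.support_nonempty_iff.mpr hv
  refine ⟨j, v j, Finsupp.mem_support_iff.mp hj, ?_⟩
  ext t
  by_cases ht : t = j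
  · subst ht; rw [single_eq_same]
  · rw [single_eq_of_ne' (Ne.symm ht)]
    by_contra hvt
    exact ht (hsupp t (Finsupp.mem_support_iff.mpr hvt) j hj)
end key


/-- Let `Γ ↷ I` be a faithful transitive action of a countable group on a countable set such
that `Stab(i)·j` is infinite whenever `i ≠ j`, let `Σ₀` be a nontrivial abelian group, and
let `G = Σ₀^(I) ⋊ Γ` be the generalized wreath product. Then every automorphism `δ` of `G`
sends, up to an inner automorphism, the copy of `Σ₀` in any position `i₀` to itself via an
automorphism of `Σ₀`; in particular every automorphism of `G` maps the base subgroup `Σ`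
onto itself. -/
theorem aut_generalized_wreath
    {Γ I A : Type*} [Group Γ] [Countable Γ] [Countable I] [MulAction Γ I]
    (hfaith : ∀ g : Γ, (∀ i : I, g • i = i) → g = 1)
    (htrans : ∀ i j : I, ∃ g : Γ, g • i = j)
    (hstab : ∀ i j : I, i ≠ j → {x : I | ∃ g : Γ, g • i = i ∧ x = g • j}.Infinite)
    [AddCommGroup A] [Nontrivial A]
    (φ : Γ →* MulAut (Multiplicative (I →₀ A))) (hφ : IsCoordinatePermutationAction φ) :
    (∀ (δ : MulAut ((Multiplicative (I →₀ A)) ⋊[φ] Γ)) (i₀ : I),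
      ∃ (g₀ : (Multiplicative (I →₀ A)) ⋊[φ] Γ) (δ₀ : AddAut A),
        ∀ b : A,
          g₀ * δ ⟨Multiplicative.ofAdd (Finsupp.single i₀ b), 1⟩ * g₀⁻¹ =
            ⟨Multiplicative.ofAdd (Finsupp.single i₀ (δ₀ b)), 1⟩)
    ∧
    (∀ δ : MulAut ((Multiplicative (I →₀ A)) ⋊[φ] Γ),
      Subgroup.map δ.toMonoidHom
          (SemidirectProduct.inl : Multiplicative (I →₀ A) →* _).range =
        (SemidirectProduct.inl : Multiplicative (I →₀ A) →* _).range) := by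
  classical
  have hφ' : ∀ (g : Γ) (a : Multiplicative (I →₀ A)) (i : I),
      Multiplicative.toAdd (φ g a) i = Multiplicative.toAdd a (g⁻¹ • i) := hφ
  have hnc : ∀ {x : Multiplicative (I →₀ A) ⋊[φ] Γ}, x.right ≠ 1 →
      ∃ y : Multiplicative (I →₀ A) ⋊[φ] Γ, ¬ Commute x (y * x * y⁻¹) :=
    fun {x} hx => exists_nonconj hφ' hfaith hstab hx
  constructor
  · intro δ i₀
    have hinj : ∀ u w : I →₀ A,
        (inl (ofAdd u) : Multiplicative (I →₀ A) ⋊[φ] Γ) = inl (ofAdd w) → u = w := by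
      intro u w h
      exact Multiplicative.ofAdd.injective (inl_injective h)
    have hright1 : ∀ (δ' : MulAut (Multiplicative (I →₀ A) ⋊[φ] Γ))
        (u : Multiplicative (I →₀ A)), δ' (inl u) = inl ((δ' (inl u)).left) :=
      fun δ' u => (inl_left_of_right_one (map_right_one hnc δ' (right_inl _))).symm
    -- the additive equivalence θ
    have hgf : ∀ a : I →₀ A,
        toAdd ((δ.symm (inl (ofAdd (toAdd ((δ (inl (ofAdd a))).left))))).left) = a := by
      intro a
      show toAdd ((δ.symm (inl ((δ (inl (ofAdd a))).left))).left) = a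
      rw [← hright1 δ (ofAdd a), MulEquiv.symm_apply_apply, left_inl, toAdd_ofAdd]
    have hfg : ∀ a : I →₀ A,
        toAdd ((δ (inl (ofAdd (toAdd ((δ.symm (inl (ofAdd a))).left))))).left) = a := by
      intro a
      show toAdd ((δ (inl ((δ.symm (inl (ofAdd a))).left))).left) = a
      rw [← hright1 δ.symm (ofAdd a), MulEquiv.apply_symm_apply, left_inl, toAdd_ofAdd]
    have hadd : ∀ a b : I →₀ A,
        toAdd ((δ (inl (ofAdd (a + b)))).left)
          = toAdd ((δ (inl (ofAdd a))).left) + toAdd ((δ (inl (ofAdd b))).left) := by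
      intro a b
      apply hinj
      show (inl ((δ (inl (ofAdd (a + b)))).left) : Multiplicative (I →₀ A) ⋊[φ] Γ)
          = inl ((δ (inl (ofAdd a))).left * (δ (inl (ofAdd b))).left)
      rw [map_mul (inl : Multiplicative (I →₀ A) →* _), ← hright1 δ (ofAdd a),
        ← hright1 δ (ofAdd b), ← hright1 δ (ofAdd (a + b)), ← map_mul δ,
        ← map_mul (inl : Multiplicative (I →₀ A) →* _)]
      rfl
    set θ : (I →₀ A) ≃+ (I →₀ A) :=
      { toFun := fun a => toAdd ((δ (inl (ofAdd a))).left)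
        invFun := fun a => toAdd ((δ.symm (inl (ofAdd a))).left)
        left_inv := hgf
        right_inv := hfg
        map_add' := hadd } with hθdef
    have hθinl : ∀ a : I →₀ A, δ (inl (ofAdd a)) = inl (ofAdd (θ a)) := by
      intro a
      exact hright1 δ (ofAdd a)
    -- the automorphism d of Γ
    have hdleft : ∀ (δ' : MulAut (Multiplicative (I →₀ A) ⋊[φ] Γ)) (g : Γ),
        (δ'.symm (inr ((δ' (inr g)).right))).right = g := by
      intro δ' g
      have h1 : (inl ((δ' (inr g)).left) : Multiplicative (I →₀ A) ⋊[φ] Γ)⁻¹ * δ' (inr g)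
          = inr ((δ' (inr g)).right) := by
        nth_rewrite 2 [← inl_left_mul_inr_right (δ' (inr g))]
        rw [inv_mul_cancel_left]
      rw [← h1, map_mul, map_inv, MulEquiv.symm_apply_apply, mul_right, inv_right,
        map_right_one hnc δ'.symm (right_inl _), right_inr, inv_one, one_mul]
    have hdmul : ∀ g h : Γ, (δ (inr (g * h))).right = (δ (inr g)).right * (δ (inr h)).right := by
      intro g h
      rw [map_mul (inr : Γ →* _), map_mul δ, mul_right]
    set d : Γ ≃* Γ :=
      { toFun := fun g => (δ (inr g)).right
        invFun := fun g => (δ.symm (inr g)).right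
        left_inv := fun g => hdleft δ g
        right_inv := fun g => by
          have := hdleft δ.symm g
          rwa [MulEquiv.symm_symm] at this
        map_mul' := hdmul } with hddef
    -- equivariance
    have hequiv : ∀ (g : Γ) (a : I →₀ A),
        θ (toAdd (φ g (ofAdd a))) = toAdd (φ (d g) (ofAdd (θ a))) := by
      intro g a
      apply hinj
      rw [← hθinl]
      have h1 : (ofAdd (toAdd (φ g (ofAdd a)))) = φ g (ofAdd a) := rfl
      rw [h1]
      have h2 : (inl (φ g (ofAdd a)) : Multiplicative (I →₀ A) ⋊[φ] Γ)
          = inr g * inl (ofAdd a) * inr g⁻¹ := inl_aut g (ofAdd a)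
      rw [h2, map_mul, map_mul, hθinl a]
      have h4 : δ (inr (g⁻¹ : Γ)) = (δ (inr g))⁻¹ := by
        rw [map_inv (inr : Γ →* _), map_inv δ]
      rw [h4, conj_inl (δ (inr g)) (ofAdd (θ a))]
      rfl
    -- apply the key lemma
    obtain ⟨b₀, hb₀⟩ : ∃ b₀ : A, b₀ ≠ 0 := exists_ne 0
    obtain ⟨j₁, c₁, hc₁, hj₁⟩ := key_lemma hφ' hstab θ d hequiv i₀ b₀ hb₀
    -- uniformity of the target index
    have huniq : ∀ (b : A), b ≠ 0 → ∀ (j : I) (c : A), c ≠ 0 →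
        θ (single i₀ b) = single j c → j = j₁ := by
      intro b hb j c hc heq
      by_cases hbb : b + b₀ = 0
      · have hsum0 : (single j c + single j₁ c₁ : I →₀ A) = 0 := by
          rw [← heq, ← hj₁, ← map_add, ← Finsupp.single_add, hbb, Finsupp.single_zero, map_zero]
        by_contra hne
        have e0 := congrArg (fun u => u j) hsum0
        simp only [Finsupp.add_apply, single_eq_same, single_eq_of_ne' (Ne.symm hne), add_zero,
          Finsupp.zero_apply] at e0
        exact hc e0
      · obtain ⟨j₂, c₂, hc₂, hj₂⟩ := key_lemma hφ' hstab θ d hequiv i₀ (b + b₀) hbb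
        have hsum : θ (single i₀ (b + b₀)) = single j c + single j₁ c₁ := by
          rw [Finsupp.single_add, map_add, heq, hj₁]
        by_contra hne
        have e1 : (single j₂ c₂ : I →₀ A) j = c := by
          rw [← hj₂, hsum, Finsupp.add_apply, single_eq_same, single_eq_of_ne' (Ne.symm hne),
            add_zero]
        have e2 : (single j₂ c₂ : I →₀ A) j₁ = c₁ := by
          rw [← hj₂, hsum, Finsupp.add_apply, single_eq_same, single_eq_of_ne' hne, zero_add]
        have hj2j : j₂ = j := by
          by_contra h
          rw [single_eq_of_ne' h] at e1
          exact hc e1.symm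
        have hj2j1 : j₂ = j₁ := by
          by_contra h
          rw [single_eq_of_ne' h] at e2
          exact hc₁ e2.symm
        exact hne (hj2j ▸ hj2j1)
    -- the coordinate automorphism
    set f : A → A := fun b => (θ (single i₀ b)) j₁ with hfdef
    have hf0 : f 0 = 0 := by
      rw [hfdef]
      show (θ (single i₀ (0:A))) j₁ = 0
      rw [Finsupp.single_zero, map_zero, Finsupp.zero_apply]
    have hθf : ∀ b : A, θ (single i₀ b) = single j₁ (f b) := by
      intro b
      rcases eq_or_ne b 0 with rfl | hb
      · rw [hf0, Finsupp.single_zero, Finsupp.single_zero, map_zero]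
      · obtain ⟨j, c, hc, heq⟩ := key_lemma hφ' hstab θ d hequiv i₀ b hb
        have hj : j = j₁ := huniq b hb j c hc heq
        subst hj
        have hfb : f b = c := by
          rw [hfdef]
          show (θ (single i₀ b)) j = c
          rw [heq, single_eq_same]
        rw [heq, hfb]
    have hfadd : ∀ a b : A, f (a + b) = f a + f b := by
      intro a b
      show (θ (single i₀ (a + b))) j₁ = (θ (single i₀ a)) j₁ + (θ (single i₀ b)) j₁
      rw [Finsupp.single_add, map_add, Finsupp.add_apply]
    have hfinj : Function.Injective f := by
      intro a b h
      have h1 : θ (single i₀ a) = θ (single i₀ b) := by rw [hθf, hθf, h]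
      have h2 := θ.injective h1
      have h3 := congrArg (fun u => u i₀) h2
      simpa only [single_eq_same] using h3
    have hequiv2 : ∀ (g : Γ) (a : I →₀ A),
        θ.symm (toAdd (φ g (ofAdd a))) = toAdd (φ (d.symm g) (ofAdd (θ.symm a))) := by
      intro g a
      apply θ.injective
      rw [AddEquiv.apply_symm_apply, hequiv (d.symm g) (θ.symm a), MulEquiv.apply_symm_apply,
        AddEquiv.apply_symm_apply]
    have hfsurj : Function.Surjective f := by
      intro c
      rcases eq_or_ne c 0 with rfl | hc
      · exact ⟨0, hf0⟩
      · obtain ⟨i₂, c₂, hc₂, hi₂⟩ := key_lemma hφ' hstab θ.symm d.symm hequiv2 j₁ c hc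
        have hth : θ (single i₂ c₂) = single j₁ c := by
          have h5 := congrArg θ hi₂
          rw [AddEquiv.apply_symm_apply] at h5
          exact h5.symm
        have hi20 : i₂ = i₀ := by
          by_contra hne
          by_cases hcc : c + c₁ = 0
          · have h1 : θ (single i₂ c₂ + single i₀ b₀) = 0 := by
              rw [map_add, hth, hj₁, ← Finsupp.single_add, hcc, Finsupp.single_zero]
            have h2 : (single i₂ c₂ + single i₀ b₀ : I →₀ A) = 0 := by
              apply θ.injective
              rw [h1, map_zero]
            have h3 := congrArg (fun u => u i₀) h2
            simp only [Finsupp.add_apply, single_eq_same, single_eq_of_ne' hne, zero_add,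
              Finsupp.zero_apply] at h3
            exact hb₀ h3
          · obtain ⟨i₃, c₃, hc₃, hi₃⟩ :=
              key_lemma hφ' hstab θ.symm d.symm hequiv2 j₁ (c + c₁) hcc
            have h1 : (single i₂ c₂ + single i₀ b₀ : I →₀ A) = single i₃ c₃ := by
              rw [← hi₃]
              apply θ.injective
              rw [map_add, hth, hj₁, AddEquiv.apply_symm_apply, Finsupp.single_add]
            have e1 := congrArg (fun u => u i₂) h1
            have e2 := congrArg (fun u => u i₀) h1
            simp only [Finsupp.add_apply, single_eq_same, single_eq_of_ne' hne,
              single_eq_of_ne' (Ne.symm hne), add_zero, zero_add] at e1 e2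
            have h3 : i₃ = i₂ := by
              by_contra h
              rw [single_eq_of_ne' h] at e1
              exact hc₂ e1
            have h4 : i₃ = i₀ := by
              by_contra h
              rw [single_eq_of_ne' h] at e2
              exact hb₀ e2
            exact hne (h3 ▸ h4)
        subst hi20
        refine ⟨c₂, ?_⟩
        show (θ (single i₂ c₂)) j₁ = c
        rw [hth, single_eq_same]
    set δ₀ : AddAut A := AddEquiv.ofBijective (AddMonoidHom.mk' f hfadd) ⟨hfinj, hfsurj⟩
      with hδ₀def
    obtain ⟨h, hh⟩ := htrans j₁ i₀
    refine ⟨inr h, δ₀, ?_⟩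
    intro b
    have h1 : (⟨ofAdd (single i₀ b), 1⟩ : Multiplicative (I →₀ A) ⋊[φ] Γ)
        = inl (ofAdd (single i₀ b)) := rfl
    rw [h1, hθinl (single i₀ b), hθf b]
    have h2 : ((inr h : Multiplicative (I →₀ A) ⋊[φ] Γ))⁻¹ = inr h⁻¹ :=
      (map_inv (inr : Γ →* _) h).symm
    rw [h2, ← inl_aut h (ofAdd (single j₁ (f b)))]
    have h3 : φ h (ofAdd (single j₁ (f b))) = ofAdd (single (h • j₁) (f b)) := by
      have h4 := congrArg ofAdd (psi_single' hφ' h j₁ (f b))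
      rwa [ofAdd_toAdd] at h4
    rw [h3, hh]
    rfl
  · intro δ
    exact part2 hnc δ
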